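/- Let n ≥ 2 and let i be an integer with 1 ≤ i ≤ n/2. Then every partition λ of n that is an i-cycle detector satisfies λ ⊴ (n−i, i) in the dominance (majorization) order; that is, (n−i, i) is the unique maximum of the dominance order among i-cycle detectors of n. -/

import Mathlib

/-- The `j`-th part (1-indexed) of a partition given as a list of parts in decreasing
order, padded with zeros beyond the end. -/
def part (l : List ℕ) (j : ℕ) : ℕ := l.getD (j - 1) 0

/-- The `j`-th part (1-indexed) of the conjugate partition: `λ′_j = #{m : λ_m ≥ j}`. -/
def conjPart (l : List ℕ) (j : ℕ) : ℕ := (l.filter (fun x => j ≤ x)).length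

/-- `λ` is an `i`-cycle detector if the hooks at cells `(2,1)` and `(1,2)` both have
length at least `i`, i.e. `λ_2 + λ′_1 − 2 ≥ i` and `λ′_2 + λ_1 − 2 ≥ i`. -/
def IsCycleDetector (l : List ℕ) (i : ℕ) : Prop :=
  i + 2 ≤ part l 2 + conjPart l 1 ∧ i + 2 ≤ conjPart l 2 + part l 1

/-- Partial sum of the first `m` parts. -/
def psum (l : List ℕ) (m : ℕ) : ℕ := (l.take m).sum

lemma length_le_sum' (t : List ℕ) (h : ∀ x ∈ t, 0 < x) : t.length ≤ t.sum := by
  induction t with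
  | nil => simp
  | cons a s ih =>
    have h1 := h a (by simp)
    have h2 := ih (fun x hx => h x (by simp [hx]))
    simp only [List.length_cons, List.sum_cons]
    omega

/-- Every `i`-cycle detector `λ` of `n` satisfies `λ ⊴ (n−i, i)` in the dominance
order: `(n−i, i)` is the maximum of the dominance order among `i`-cycle detectors. -/
theorem cycle_detector_dominated (n i : ℕ) (hn : 2 ≤ n) (hi1 : 1 ≤ i) (hi2 : 2 * i ≤ n)
    (l : List ℕ) (hs : l.Pairwise (· ≥ ·)) (hpos : ∀ x ∈ l, 0 < x) (hsum : l.sum = n)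
    (hdet : IsCycleDetector l i) :
    ∀ m : ℕ, psum l m ≤ psum [n - i, i] m := by
  obtain ⟨hd1, -⟩ := hdet
  have hlen : conjPart l 1 = l.length := by
    unfold conjPart
    congr 1
    apply List.filter_eq_self.mpr
    intro x hx
    have := hpos x hx; simp only [decide_eq_true_eq]; omega
  rw [hlen] at hd1
  match l, hpos, hsum, hd1 with
  | [], _, hsum, _ =>
    simp at hsum; omega
  | [a], _, _, hd1 =>
    simp [part] at hd1
  | a :: b :: t, hpos, hsum, hd1 =>
    have ht : t.length ≤ t.sum :=
      length_le_sum' t (fun x hx => hpos x (by simp [hx]))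
    have hb : part (a :: b :: t) 2 = b := rfl
    rw [hb] at hd1
    simp only [List.length_cons] at hd1
    simp only [List.sum_cons] at hsum
    -- so i ≤ b + t.sum
    intro m
    match m with
    | 0 => simp [psum]
    | 1 =>
      show a ≤ (List.take 1 [n - i, i]).sum
      simp only [List.take, List.sum_cons, List.sum_nil]
      omega
    | (m + 2) =>
      have h1 : psum (a :: b :: t) (m + 2) ≤ a + (b + t.sum) := by
        unfold psum
        simp only [List.take, List.sum_cons]
        have : (t.take m).sum ≤ t.sum := by
          conv_rhs => rw [← List.take_append_drop m t]
          rw [List.sum_append]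
          omega
        omega
      have h2 : psum [n - i, i] (m + 2) = n := by
        unfold psum
        simp only [List.take, List.sum_cons, List.sum_nil, List.take_nil]
        omega
      omega
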